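/- A pair (d, D) of linear maps on V is a biderivation of the Leibniz algebra L₁ if and only if there exist complex numbers c, f, g such that d(e₁) = c·e₃ + f·e₄, d(e₂) = c·e₄, d(e₃) = d(e₄) = 0, D(e₁) = c·e₃ + g·e₄, and D(e₂) = D(e₃) = D(e₄) = 0. Consequently, the space of biderivations of L₁ is a 3-dimensional linear subspace of End(V) × End(V). -/
import Mathlib


/-- `V = ℂ⁴`. -/
abbrev V : Type := Fin 4 → ℂ

/-- standard basis: `e 0 = e₁`, ..., `e 3 = e₄`. -/
def e (i : Fin 4) : V := Pi.single i 1

/-- Bracket of the Leibniz algebra `L₁`: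
`⟦e₁,e₁⟧ = e₂`, `⟦e₂,e₁⟧ = e₃`, `⟦e₃,e₁⟧ = e₄`, all other basis products zero. -/
def br (x y : V) : V :=
  (x 0 * y 0) • e 1 + (x 1 * y 0) • e 2 + (x 2 * y 0) • e 3

/-- A derivation. -/
def IsDer (d : V →ₗ[ℂ] V) : Prop :=
  ∀ x y : V, d (br x y) = br (d x) y + br x (d y)

/-- An antiderivation. -/
def IsAntiDer (D : V →ₗ[ℂ] V) : Prop :=
  ∀ x y : V, D (br x y) = br x (D y) - br y (D x)

/-- A biderivation: a pair of a derivation and an antiderivation satisfying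
`⟦d(x),y⟧ = ⟦D(x),y⟧` for all `x, y`. -/
def IsBider (d D : V →ₗ[ℂ] V) : Prop :=
  IsDer d ∧ IsAntiDer D ∧ ∀ x y : V, br (d x) y = br (D x) y

section Aux

set_option linter.unreachableTactic false
set_option linter.unusedTactic false
set_option linter.unnecessarySeqFocus false

lemma e_apply (i j : Fin 4) : e i j = if j = i then 1 else 0 := by
  simp [e, Pi.single_apply]

lemma basis_expand (x : V) : x = x 0 • e 0 + x 1 • e 1 + x 2 • e 2 + x 3 • e 3 := by
  funext i; fin_cases i <;> simp [e_apply]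

lemma expand (f : V →ₗ[ℂ] V) (x : V) :
    f x = x 0 • f (e 0) + x 1 • f (e 1) + x 2 • f (e 2) + x 3 • f (e 3) := by
  conv_lhs => rw [basis_expand x]
  simp

lemma ext_basis {f g : V →ₗ[ℂ] V} (h0 : f (e 0) = g (e 0)) (h1 : f (e 1) = g (e 1))
    (h2 : f (e 2) = g (e 2)) (h3 : f (e 3) = g (e 3)) : f = g :=
  LinearMap.ext fun x => by rw [expand f, expand g, h0, h1, h2, h3]

lemma hbr0 (z : V) : br (e 0) z = z 0 • e 1 := by
  funext i; simp [br, e_apply]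
lemma hbr1 (z : V) : br (e 1) z = z 0 • e 2 := by
  funext i; simp [br, e_apply]
lemma hbr2 (z : V) : br (e 2) z = z 0 • e 3 := by
  funext i; simp [br, e_apply]
lemma br00 : br (e 0) (e 0) = e 1 := by funext i; simp [br, e_apply]
lemma br10 : br (e 1) (e 0) = e 2 := by funext i; simp [br, e_apply]
lemma br20 : br (e 2) (e 0) = e 3 := by funext i; simp [br, e_apply]
lemma br01 : br (e 0) (e 1) = 0 := by funext i; simp [br, e_apply]
lemma brz (z : V) : br 0 z = 0 := by funext i; simp [br]

/-- The key characterization of biderivations of `L₁`. -/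
lemma bider_iff (d D : V →ₗ[ℂ] V) : IsBider d D ↔ ∃ c f g : ℂ,
      d (e 0) = c • e 2 + f • e 3 ∧
      d (e 1) = c • e 3 ∧
      d (e 2) = 0 ∧ d (e 3) = 0 ∧
      D (e 0) = c • e 2 + g • e 3 ∧
      D (e 1) = 0 ∧ D (e 2) = 0 ∧ D (e 3) = 0 := by
  constructor
  · rintro ⟨hd, hD, hc⟩
    have hD1 : D (e 1) = 0 := by
      have h0 := hD (e 0) (e 0); rw [br00] at h0; rw [h0]; abel
    have hD00 : D (e 0) 0 = 0 := by
      have h0 := hD (e 0) (e 1); rw [br01, hD1, map_zero, hbr1] at h0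
      have h2 := congrFun h0 2
      simpa [br, e_apply] using h2
    have hD2 : D (e 2) = 0 := by
      have h0 := hD (e 1) (e 0); rw [br10, hD1, hbr1, hbr0] at h0
      rw [h0, hD00]; simp
    have hD3 : D (e 3) = 0 := by
      have h0 := hD (e 2) (e 0); rw [br20, hD2, hbr2, hbr0] at h0
      rw [h0, hD00]; simp
    have hc0 := hc (e 0) (e 0)
    have s1 : d (e 0) 0 = 0 := by
      have h1 := congrFun hc0 1; simp [br, e_apply] at h1
      rw [h1, hD00]
    have s2 : d (e 0) 1 = D (e 0) 1 := by
      have h1 := congrFun hc0 2; simpa [br, e_apply] using h1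
    have s3 : d (e 0) 2 = D (e 0) 2 := by
      have h1 := congrFun hc0 3; simpa [br, e_apply] using h1
    have hc1 := hc (e 1) (e 0)
    rw [hD1, brz] at hc1
    have t0 : d (e 1) 0 = 0 := by
      have h1 := congrFun hc1 1; simpa [br, e_apply] using h1
    have t1 : d (e 1) 1 = 0 := by
      have h1 := congrFun hc1 2; simpa [br, e_apply] using h1
    have t2 : d (e 1) 2 = 0 := by
      have h1 := congrFun hc1 3; simpa [br, e_apply] using h1
    have hd0 := hd (e 0) (e 0)
    rw [br00, hbr0] at hd0
    have u2 : d (e 0) 1 = 0 := by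
      have h1 := congrFun hd0 2; simp [br, e_apply, t2] at h1
      exact h1.symm
    have u3 : d (e 1) 3 = d (e 0) 2 := by
      have h1 := congrFun hd0 3; simpa [br, e_apply] using h1
    have hde2 : d (e 2) = 0 := by
      have h0 := hd (e 1) (e 0)
      rw [br10, hbr1] at h0
      rw [h0]
      funext i; fin_cases i <;> simp [br, e_apply, t0, t1, t2, s1]
    have hde3 : d (e 3) = 0 := by
      have h0 := hd (e 2) (e 0)
      rw [br20, hbr2, hde2, brz] at h0
      rw [h0, s1]; simp
    refine ⟨d (e 0) 2, d (e 0) 3, D (e 0) 3, ?_, ?_, hde2, hde3, ?_, hD1, hD2, hD3⟩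
    · funext i; fin_cases i <;> simp [e_apply, s1, u2]
    · funext i
      have h1 := congrFun hd0 i
      fin_cases i <;> simp [br, e_apply, t0, t1, t2, u3, s1]
    · funext i; fin_cases i <;>
        simp [e_apply, hD00, ← s2, ← s3, u2]
  · rintro ⟨c, f, g, h1, h2, h3, h4, h5, h6, h7, h8⟩
    have hdx : ∀ z : V, d z = (z 0 * c) • e 2 + (z 0 * f + z 1 * c) • e 3 := by
      intro z
      rw [expand d z, h1, h2, h3, h4]
      funext i; fin_cases i <;> simp [e_apply] <;> ring
    have hDx : ∀ z : V, D z = (z 0 * c) • e 2 + (z 0 * g) • e 3 := by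
      intro z
      rw [expand D z, h5, h6, h7, h8]
      funext i; fin_cases i <;> simp [e_apply] <;> ring
    refine ⟨?_, ?_, ?_⟩
    · intro x y
      rw [hdx, hdx, hdx]
      funext i; fin_cases i <;> simp [br, e_apply] <;> ring
    · intro x y
      rw [hDx, hDx, hDx]
      funext i; fin_cases i <;> simp [br, e_apply] <;> ring
    · intro x y
      rw [hdx, hDx]
      funext i; fin_cases i <;> simp [br, e_apply] <;> ring

/-- e0 ↦ e2, e1 ↦ e3 -/
def dA : V →ₗ[ℂ] V where
  toFun x := x 0 • e 2 + x 1 • e 3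
  map_add' x y := by simp [add_smul]; abel
  map_smul' a x := by simp [smul_smul, smul_add]

/-- e0 ↦ e3 -/
def dB : V →ₗ[ℂ] V where
  toFun x := x 0 • e 3
  map_add' x y := by simp [add_smul]
  map_smul' a x := by simp [smul_smul]

/-- e0 ↦ e2 -/
def dC : V →ₗ[ℂ] V where
  toFun x := x 0 • e 2
  map_add' x y := by simp [add_smul]
  map_smul' a x := by simp [smul_smul]

/-- parametrization of the biderivations by `ℂ³`. -/
noncomputable def Phi : (Fin 3 → ℂ) →ₗ[ℂ] (V →ₗ[ℂ] V) × (V →ₗ[ℂ] V) where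
  toFun v := (v 0 • dA + v 1 • dB, v 0 • dC + v 2 • dB)
  map_add' v w := by
    ext x i <;> simp [add_smul] <;> ring
  map_smul' a v := by
    ext x i <;> simp [smul_smul] <;> ring

lemma Phi_fst (v : Fin 3 → ℂ) : (Phi v).1 = v 0 • dA + v 1 • dB := rfl
lemma Phi_snd (v : Fin 3 → ℂ) : (Phi v).2 = v 0 • dC + v 2 • dB := rfl

lemma Phi_inj : Function.Injective Phi := by
  rw [← LinearMap.ker_eq_bot]
  ext v
  simp only [LinearMap.mem_ker, Submodule.mem_bot]
  constructor
  · intro h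
    have h1 := congrFun (LinearMap.congr_fun (congrArg Prod.fst h) (e 0)) 2
    have h2 := congrFun (LinearMap.congr_fun (congrArg Prod.fst h) (e 0)) 3
    have h3 := congrFun (LinearMap.congr_fun (congrArg Prod.snd h) (e 0)) 3
    simp [Phi, dA, dB, dC, e_apply] at h1 h2 h3
    funext i; fin_cases i <;> simp [h1, h2, h3]
  · rintro rfl; simp

end Aux

theorem biderivations_of_L1 :
    (∀ d D : V →ₗ[ℂ] V, IsBider d D ↔ ∃ c f g : ℂ,
      d (e 0) = c • e 2 + f • e 3 ∧
      d (e 1) = c • e 3 ∧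
      d (e 2) = 0 ∧ d (e 3) = 0 ∧
      D (e 0) = c • e 2 + g • e 3 ∧
      D (e 1) = 0 ∧ D (e 2) = 0 ∧ D (e 3) = 0) ∧
    ∃ S : Submodule ℂ ((V →ₗ[ℂ] V) × (V →ₗ[ℂ] V)),
      (S : Set ((V →ₗ[ℂ] V) × (V →ₗ[ℂ] V))) = {p | IsBider p.1 p.2} ∧
      Module.finrank ℂ S = 3 := by
  refine ⟨bider_iff, LinearMap.range Phi, ?_, ?_⟩
  · ext p
    simp only [SetLike.mem_coe, LinearMap.mem_range, Set.mem_setOf_eq]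
    rw [bider_iff]
    constructor
    · rintro ⟨v, rfl⟩
      refine ⟨v 0, v 1, v 2, ?_, ?_, ?_, ?_, ?_, ?_, ?_, ?_⟩ <;>
        (funext i; fin_cases i <;> simp [Phi, dA, dB, dC, e_apply])
    · rintro ⟨c, f, g, h1, h2, h3, h4, h5, h6, h7, h8⟩
      refine ⟨![c, f, g], Prod.ext ?_ ?_⟩
      · rw [Phi_fst]
        refine ext_basis ?_ ?_ ?_ ?_ <;>
          simp only [LinearMap.add_apply, LinearMap.smul_apply,
            Matrix.cons_val_zero, Matrix.cons_val_one, Matrix.head_cons] <;>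
          [rw [h1]; rw [h2]; rw [h3]; rw [h4]] <;>
          (funext i; fin_cases i <;> simp [dA, dB, e_apply])
      · rw [Phi_snd]
        refine ext_basis ?_ ?_ ?_ ?_ <;>
          simp only [LinearMap.add_apply, LinearMap.smul_apply,
            Matrix.cons_val_zero, Matrix.cons_val_one, Matrix.head_cons,
            Matrix.cons_val_two, Matrix.tail_cons] <;>
          [rw [h5]; rw [h6]; rw [h7]; rw [h8]] <;>
          (funext i; fin_cases i <;> simp [dC, dB, e_apply])
  · rw [LinearMap.finrank_range_of_inj Phi_inj]
    simp
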